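/- arXiv:2512.07147 — 2 statements merged into one kernel-verified Lean document; each statement's English description precedes it below -/
import Mathlib

section
/- There is an absolute constant C such that for every j ∈ ℕ, every real C₀ ≥ 0, and every finite set S ⊂ ℝ² with |S| ≤ 2^j, the set E := {ξ ∈ S : there exist two distinct affine lines ℓ₁, ℓ₂ ⊂ ℝ² through ξ with |ℓ₁ ∩ S| ≥ 2^{j/2 + C₀} and |ℓ₂ ∩ S| ≥ 2^{j/2 + C₀}} satisfies |E| ≤ C · 2^{j − 2C₀}. -/
noncomputable section

/-- A subset of `ℝ²` is an affine line if it is a one-dimensional affine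
subspace, i.e. of the form `{p + t • v : t ∈ ℝ}` with `v ≠ 0`. -/
def IsLine (L : Set (ℝ × ℝ)) : Prop :=
  ∃ p v : ℝ × ℝ, v ≠ 0 ∧ L = {x | ∃ t : ℝ, x = p + t • v}

def lineThrough (x y : ℝ × ℝ) : Set (ℝ × ℝ) := {z | ∃ t : ℝ, z = x + t • (y - x)}

lemma isLine_eq_lineThrough {L : Set (ℝ × ℝ)} {x y : ℝ × ℝ}
    (hL : IsLine L) (hx : x ∈ L) (hy : y ∈ L) (hxy : x ≠ y) : L = lineThrough x y := by
  obtain ⟨p, v, hv, rfl⟩ := hL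
  obtain ⟨a, rfl⟩ := hx
  obtain ⟨b, rfl⟩ := hy
  have hab : a ≠ b := by rintro rfl; exact hxy rfl
  have hyx : (p + b • v) - (p + a • v) = (b - a) • v := by
    rw [sub_smul]; abel
  ext z
  constructor
  · rintro ⟨t, rfl⟩
    refine ⟨(t - a) / (b - a), ?_⟩
    rw [hyx, smul_smul, div_mul_cancel₀ _ (sub_ne_zero.2 hab.symm), sub_smul]
    abel
  · rintro ⟨s, rfl⟩
    refine ⟨a + s * (b - a), ?_⟩
    rw [hyx, smul_smul, add_smul]
    abel

lemma inter_subsingleton {L₁ L₂ : Set (ℝ × ℝ)} (h₁ : IsLine L₁) (h₂ : IsLine L₂)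
    (hne : L₁ ≠ L₂) : ∀ x ∈ L₁ ∩ L₂, ∀ y ∈ L₁ ∩ L₂, x = y := by
  rintro x ⟨hx1, hx2⟩ y ⟨hy1, hy2⟩
  by_contra hxy
  exact hne ((isLine_eq_lineThrough h₁ hx1 hy1 hxy).trans
    (isLine_eq_lineThrough h₂ hx2 hy2 hxy).symm)

open Finset in
open scoped Classical in
lemma counting {α : Type*} [DecidableEq α] (S' : Finset α) (F : Finset (Set α)) (m : ℕ)
    (hm : ∀ L ∈ F, m ≤ (S'.filter (· ∈ L)).card)
    (hsub : ∀ p ∈ F.offDiag, (S'.filter (fun x => x ∈ p.1 ∧ x ∈ p.2)).card ≤ 1) :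
    F.card * m ≤ S'.card + F.offDiag.card := by
  classical
  have swap1 : ∑ L ∈ F, (S'.filter (· ∈ L)).card = ∑ x ∈ S', (F.filter (x ∈ ·)).card := by
    simp only [card_filter]
    rw [Finset.sum_comm]
  have swap2 : ∑ x ∈ S', (F.offDiag.filter (fun p => x ∈ p.1 ∧ x ∈ p.2)).card
      = ∑ p ∈ F.offDiag, (S'.filter (fun x => x ∈ p.1 ∧ x ∈ p.2)).card := by
    simp only [card_filter]
    rw [Finset.sum_comm]
  have hd : ∀ x ∈ S', (F.filter (x ∈ ·)).card
      ≤ 1 + (F.offDiag.filter (fun p => x ∈ p.1 ∧ x ∈ p.2)).card := by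
    intro x _
    set d := (F.filter (x ∈ ·)).card with hdd
    have hod : (F.offDiag.filter (fun p => x ∈ p.1 ∧ x ∈ p.2)).card = d * d - d := by
      have : F.offDiag.filter (fun p => x ∈ p.1 ∧ x ∈ p.2) = (F.filter (x ∈ ·)).offDiag := by
        ext p
        simp only [mem_filter, mem_offDiag]
        tauto
      rw [this, offDiag_card]
    rw [hod]
    rcases Nat.lt_or_ge d 2 with h2 | h2
    · interval_cases d <;> simp
    · have h1 : d * 2 ≤ d * d := Nat.mul_le_mul_left d h2
      omega
  calc F.card * m = F.card • m := rfl
    _ ≤ ∑ L ∈ F, (S'.filter (· ∈ L)).card := Finset.card_nsmul_le_sum _ _ _ hm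
    _ = ∑ x ∈ S', (F.filter (x ∈ ·)).card := swap1
    _ ≤ ∑ x ∈ S', (1 + (F.offDiag.filter (fun p => x ∈ p.1 ∧ x ∈ p.2)).card) :=
        Finset.sum_le_sum hd
    _ = S'.card + ∑ x ∈ S', (F.offDiag.filter (fun p => x ∈ p.1 ∧ x ∈ p.2)).card := by
        rw [Finset.sum_add_distrib, Finset.sum_const, smul_eq_mul, mul_one]
    _ = S'.card + ∑ p ∈ F.offDiag, (S'.filter (fun x => x ∈ p.1 ∧ x ∈ p.2)).card := by
        rw [swap2]
    _ ≤ S'.card + ∑ p ∈ F.offDiag, 1 := by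
        exact Nat.add_le_add_left (Finset.sum_le_sum hsub) _
    _ = S'.card + F.offDiag.card := by rw [Finset.sum_const, smul_eq_mul, mul_one]

lemma ncard_le_of_two_lines {E : Set (ℝ × ℝ)} {T : Set (Set (ℝ × ℝ))} (hT : T.Finite)
    (h : ∀ ξ ∈ E, ∃ L₁ L₂ : Set (ℝ × ℝ), L₁ ∈ T ∧ L₂ ∈ T ∧ IsLine L₁ ∧ IsLine L₂ ∧
      L₁ ≠ L₂ ∧ ξ ∈ L₁ ∧ ξ ∈ L₂) :
    E.ncard ≤ T.ncard * T.ncard := by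
  classical
  choose F1 F2 h1 h2 h3 h4 h5 h6 h7 using h
  set f : (ℝ × ℝ) → Set (ℝ × ℝ) × Set (ℝ × ℝ) := fun ξ =>
    if hξ : ξ ∈ E then (F1 ξ hξ, F2 ξ hξ) else (∅, ∅) with hfdef
  have hfeq : ∀ ξ (hξ : ξ ∈ E), f ξ = (F1 ξ hξ, F2 ξ hξ) := by
    intro ξ hξ; simp only [hfdef, dif_pos hξ]
  have hmaps : ∀ ξ ∈ E, f ξ ∈ T ×ˢ T := by
    intro ξ hξ
    rw [hfeq ξ hξ]
    exact Set.mem_prod.2 ⟨h1 ξ hξ, h2 ξ hξ⟩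
  have hinj : Set.InjOn f E := by
    intro a ha b hb hab
    rw [hfeq a ha, hfeq b hb, Prod.mk.injEq] at hab
    refine inter_subsingleton (h3 a ha) (h4 a ha) (h5 a ha) a ⟨h6 a ha, h7 a ha⟩ b ⟨?_, ?_⟩
    · rw [hab.1]; exact h6 b hb
    · rw [hab.2]; exact h7 b hb
  have hle := Set.ncard_le_ncard_of_injOn f hmaps hinj (hT.prod hT)
  have hprod : (T ×ˢ T).ncard = T.ncard * T.ncard := by
    have h1 : T ×ˢ T = ↑(hT.toFinset ×ˢ hT.toFinset) := by
      rw [Finset.coe_product, Set.Finite.coe_toFinset]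
    rw [h1, Set.ncard_coe_finset, Finset.card_product, Set.ncard_eq_toFinset_card _ hT]
  rw [hprod] at hle
  exact hle

set_option maxHeartbeats 1600000 in
open Finset in
open scoped Classical in
/-- There is an absolute constant `C` such that for every
`j ∈ ℕ`, `C₀ ≥ 0` and finite `S ⊆ ℝ²` with `|S| ≤ 2^j`, the set `E` of points
of `S` lying on two distinct lines each meeting `S` in at least `2^{j/2+C₀}`
points satisfies `|E| ≤ C ⬝ 2^{j - 2C₀}`. -/
theorem stmt4 :
    ∃ C : ℝ, 0 < C ∧
      ∀ (j : ℕ) (C₀ : ℝ), 0 ≤ C₀ →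
      ∀ S : Set (ℝ × ℝ), S.Finite → S.ncard ≤ 2 ^ j →
      (({ξ ∈ S | ∃ L₁ L₂ : Set (ℝ × ℝ), IsLine L₁ ∧ IsLine L₂ ∧ L₁ ≠ L₂ ∧
            ξ ∈ L₁ ∧ ξ ∈ L₂ ∧
            (2 : ℝ) ^ ((j : ℝ) / 2 + C₀) ≤ ((L₁ ∩ S).ncard : ℝ) ∧
            (2 : ℝ) ^ ((j : ℝ) / 2 + C₀) ≤ ((L₂ ∩ S).ncard : ℝ)}).ncard : ℝ)
        ≤ C * (2 : ℝ) ^ ((j : ℝ) - 2 * C₀) := by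
  refine ⟨16, by norm_num, ?_⟩
  intro j C₀ hC₀ S hSfin hScard
  set N : ℝ := (2 : ℝ) ^ ((j : ℝ) / 2 + C₀) with hNdef
  set E := {ξ ∈ S | ∃ L₁ L₂ : Set (ℝ × ℝ), IsLine L₁ ∧ IsLine L₂ ∧ L₁ ≠ L₂ ∧
            ξ ∈ L₁ ∧ ξ ∈ L₂ ∧
            N ≤ ((L₁ ∩ S).ncard : ℝ) ∧ N ≤ ((L₂ ∩ S).ncard : ℝ)} with hEdef
  have hES : E ⊆ S := fun x hx => hx.1
  have hEfin : E.Finite := hSfin.subset hES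
  have h2cast : ((2 ^ j : ℕ) : ℝ) = (2 : ℝ) ^ (j : ℝ) := by
    rw [Nat.cast_pow, Nat.cast_ofNat, ← Real.rpow_natCast]
  have hScardR : (S.ncard : ℝ) ≤ (2 : ℝ) ^ (j : ℝ) := by
    rw [← h2cast]; exact_mod_cast hScard
  have hNpos : (0 : ℝ) < N := Real.rpow_pos_of_pos two_pos _
  by_cases hc2 : C₀ ≤ 2
  · -- trivial case
    have h1 : (E.ncard : ℝ) ≤ (2 : ℝ) ^ (j : ℝ) :=
      le_trans (by exact_mod_cast Set.ncard_le_ncard hES hSfin) hScardR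
    have h2 : (2 : ℝ) ^ (j : ℝ) = (2 : ℝ) ^ ((j : ℝ) - 2 * C₀) * (2 : ℝ) ^ (2 * C₀) := by
      rw [← Real.rpow_add two_pos]; ring_nf
    have h3 : (2 : ℝ) ^ (2 * C₀) ≤ (2 : ℝ) ^ (4 : ℝ) :=
      Real.rpow_le_rpow_of_exponent_le one_le_two (by linarith)
    have h4 : (2 : ℝ) ^ (4 : ℝ) = 16 := by
      rw [show (4 : ℝ) = ((4 : ℕ) : ℝ) by norm_num, Real.rpow_natCast]; norm_num
    calc (E.ncard : ℝ) ≤ (2 : ℝ) ^ ((j : ℝ) - 2 * C₀) * (2 : ℝ) ^ (2 * C₀) := by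
          rw [← h2]; exact h1
      _ ≤ (2 : ℝ) ^ ((j : ℝ) - 2 * C₀) * 16 := by
          have := (Real.rpow_pos_of_pos two_pos ((j : ℝ) - 2 * C₀)).le
          nlinarith
      _ = 16 * (2 : ℝ) ^ ((j : ℝ) - 2 * C₀) := mul_comm _ _
  · push_neg at hc2
    -- main case : C₀ > 2
    have hN4 : (4 : ℝ) < N := by
      have : (2 : ℝ) ^ (2 : ℝ) < N := by
        apply Real.rpow_lt_rpow_of_exponent_lt one_lt_two
        have : (0 : ℝ) ≤ (j : ℝ) / 2 := by positivity
        linarith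
      have h4 : (2 : ℝ) ^ (2 : ℝ) = 4 := by
        rw [show (2 : ℝ) = ((2 : ℕ) : ℝ) by norm_num, Real.rpow_natCast]; norm_num
      linarith [h4 ▸ this]
    have hNsq : N * N = (2 : ℝ) ^ ((j : ℝ) + 2 * C₀) := by
      rw [hNdef, ← Real.rpow_add two_pos]; ring_nf
    have hNsq_gt : 16 * (2 : ℝ) ^ (j : ℝ) < N * N := by
      rw [hNsq]
      have : (2 : ℝ) ^ ((j : ℝ) + 4) < (2 : ℝ) ^ ((j : ℝ) + 2 * C₀) :=
        Real.rpow_lt_rpow_of_exponent_lt one_lt_two (by linarith)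
      have he : (2 : ℝ) ^ ((j : ℝ) + 4) = (2 : ℝ) ^ (j : ℝ) * 16 := by
        rw [Real.rpow_add two_pos]
        congr 1
        rw [show (4 : ℝ) = ((4 : ℕ) : ℝ) by norm_num, Real.rpow_natCast]; norm_num
      linarith [he ▸ this]
    set T := {L : Set (ℝ × ℝ) | IsLine L ∧ N ≤ ((L ∩ S).ncard : ℝ)} with hTdef
    have hTfin : T.Finite := by
      have hsub : T ⊆ (fun p : (ℝ × ℝ) × (ℝ × ℝ) => lineThrough p.1 p.2) '' (S ×ˢ S) := by
        rintro L ⟨hL, hLc⟩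
        have hfin : (L ∩ S).Finite := hSfin.inter_of_right L
        have h2le : 1 < (L ∩ S).ncard := by
          have : (1 : ℝ) < ((L ∩ S).ncard : ℝ) := by linarith
          exact_mod_cast this
        obtain ⟨x, y, hx, hy, hxy⟩ := (Set.one_lt_ncard_iff hfin).1 h2le
        exact ⟨(x, y), Set.mk_mem_prod hx.2 hy.2,
          (isLine_eq_lineThrough hL hx.1 hy.1 hxy).symm⟩
      exact ((hSfin.prod hSfin).image _).subset hsub
    set S' := hSfin.toFinset with hS'def
    set T' := hTfin.toFinset with hT'def
    have hbridge : ∀ L : Set (ℝ × ℝ), (L ∩ S).ncard = (S'.filter (· ∈ L)).card := by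
      intro L
      rw [← Set.ncard_coe_finset]
      congr 1
      ext z
      simp only [Finset.coe_filter, Set.mem_setOf_eq, hS'def, Set.Finite.mem_toFinset,
        Set.mem_inter_iff]
      tauto
    -- core counting consequence
    have key : ∀ F : Finset (Set (ℝ × ℝ)), F ⊆ T' →
        (F.card : ℝ) * N ≤ (2 : ℝ) ^ (j : ℝ) + (F.card : ℝ) * (F.card : ℝ) := by
      intro F hF
      have hm : ∀ L ∈ F, ⌈N⌉₊ ≤ (S'.filter (· ∈ L)).card := by
        intro L hL
        have hLT : L ∈ T := by rw [hT'def] at hF; exact (Set.Finite.mem_toFinset hTfin).1 (hF hL)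
        rw [← hbridge]
        exact Nat.ceil_le.2 hLT.2
      have hsubs : ∀ p ∈ F.offDiag, (S'.filter (fun x => x ∈ p.1 ∧ x ∈ p.2)).card ≤ 1 := by
        intro p hp
        rw [Finset.mem_offDiag] at hp
        obtain ⟨h1, h2, h3⟩ := hp
        have hT1 : p.1 ∈ T := (Set.Finite.mem_toFinset hTfin).1 (hF h1)
        have hT2 : p.2 ∈ T := (Set.Finite.mem_toFinset hTfin).1 (hF h2)
        apply Finset.card_le_one.2
        intro a ha b hb
        rw [Finset.mem_filter] at ha hb
        exact inter_subsingleton hT1.1 hT2.1 h3 a ⟨ha.2.1, ha.2.2⟩ b ⟨hb.2.1, hb.2.2⟩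
      have hcount := counting S' F ⌈N⌉₊ hm hsubs
      have hoff : (F.offDiag.card : ℝ) ≤ (F.card : ℝ) * (F.card : ℝ) := by
        have : F.offDiag.card ≤ (F ×ˢ F).card :=
          Finset.card_le_card (fun p hp => by rw [Finset.mem_offDiag] at hp; exact Finset.mem_product.2 ⟨hp.1, hp.2.1⟩)
        rw [Finset.card_product] at this
        exact_mod_cast this
      have hS'card : (S'.card : ℝ) ≤ (2 : ℝ) ^ (j : ℝ) := by
        have : S'.card = S.ncard := by
          rw [← Set.ncard_coe_finset, hS'def, Set.Finite.coe_toFinset]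
        rw [this]; exact hScardR
      have hceil : N ≤ (⌈N⌉₊ : ℝ) := Nat.le_ceil N
      have hcR : ((F.card * ⌈N⌉₊ : ℕ) : ℝ) ≤ (S'.card : ℝ) + (F.offDiag.card : ℝ) := by
        exact_mod_cast hcount
      push_cast at hcR
      nlinarith [Nat.cast_nonneg (α := ℝ) F.card]
    -- step 1+2 : t ≤ 2 * 2^j / N
    have hstep : (T'.card : ℝ) * N ≤ 2 * (2 : ℝ) ^ (j : ℝ) := by
      have hsmall : ∀ F : Finset (Set (ℝ × ℝ)), F ⊆ T' → (F.card : ℝ) ≤ N / 2 →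
          (F.card : ℝ) * N ≤ 2 * (2 : ℝ) ^ (j : ℝ) := by
        intro F hF hle
        have h := key F hF
        nlinarith [Nat.cast_nonneg (α := ℝ) F.card, hNpos]
      by_cases hts : (T'.card : ℝ) ≤ N / 2
      · exact hsmall T' (subset_refl _) hts
      · exfalso
        push_neg at hts
        set k := ⌊N / 2⌋₊ with hk
        have hkle : k ≤ T'.card := by
          have h1 : (k : ℝ) ≤ N / 2 := Nat.floor_le (by linarith)
          have : (k : ℝ) < (T'.card : ℝ) := lt_of_le_of_lt h1 hts
          exact_mod_cast this.le
        obtain ⟨F, hFsub, hFcard⟩ := Finset.exists_subset_card_eq hkle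
        have hkN : (k : ℝ) ≤ N / 2 := Nat.floor_le (by linarith)
        have hklow : N / 2 - 1 ≤ (k : ℝ) := by
          have := Nat.lt_floor_add_one (N / 2)
          linarith [(Nat.lt_floor_add_one (N / 2)).le]
        have hsm := hsmall F hFsub (by rw [hFcard]; exact hkN)
        rw [hFcard] at hsm
        -- k * N ≤ 2 * 2^j < N*N/8, and k ≥ N/2 - 1 > N/8 so k*N > N*N/8
        have h2j : (2:ℝ) ^ (j:ℝ) > 0 := Real.rpow_pos_of_pos two_pos _
        nlinarith
    -- step 3 : |E| ≤ t * t
    have hinj : (E.ncard : ℝ) ≤ (T'.card : ℝ) * (T'.card : ℝ) := by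
      have h2lines : ∀ ξ ∈ E, ∃ L₁ L₂ : Set (ℝ × ℝ), L₁ ∈ T ∧ L₂ ∈ T ∧ IsLine L₁ ∧ IsLine L₂ ∧
          L₁ ≠ L₂ ∧ ξ ∈ L₁ ∧ ξ ∈ L₂ := by
        rintro ξ ⟨hξS, L₁, L₂, ha, hb, hc, hd, he, hg, hi⟩
        exact ⟨L₁, L₂, ⟨ha, hg⟩, ⟨hb, hi⟩, ha, hb, hc, hd, he⟩
      have hle := ncard_le_of_two_lines hTfin h2lines
      have hTT : T.ncard = T'.card := by
        rw [← Set.ncard_coe_finset, hT'def, Set.Finite.coe_toFinset]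
      rw [hTT] at hle
      exact_mod_cast hle
    have ht2 : (T'.card : ℝ) * (T'.card : ℝ) * (N * N) ≤ 4 * ((2:ℝ)^(j:ℝ) * (2:ℝ)^(j:ℝ)) := by
      have h0 : (0:ℝ) ≤ (T'.card : ℝ) * N := by positivity
      calc (T'.card : ℝ) * (T'.card : ℝ) * (N * N) = ((T'.card : ℝ) * N) * ((T'.card : ℝ) * N) := by
            ring
        _ ≤ (2 * (2:ℝ)^(j:ℝ)) * (2 * (2:ℝ)^(j:ℝ)) := mul_le_mul hstep hstep h0 (by positivity)
        _ = 4 * ((2:ℝ)^(j:ℝ) * (2:ℝ)^(j:ℝ)) := by ring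
    have hfin2 : (E.ncard : ℝ) * (N * N) ≤ 4 * ((2:ℝ)^(j:ℝ) * (2:ℝ)^(j:ℝ)) := by
      nlinarith [hNpos, Nat.cast_nonneg (α := ℝ) E.ncard]
    -- conclude
    have hNN : N * N > 0 := by positivity
    have hgoal : (E.ncard : ℝ) ≤ 4 * (2:ℝ) ^ ((j:ℝ) - 2 * C₀) := by
      have hdiv : (E.ncard : ℝ) ≤ 4 * ((2:ℝ)^(j:ℝ) * (2:ℝ)^(j:ℝ)) / (N * N) := by
        rw [le_div_iff₀ hNN]; exact hfin2
      have heq : 4 * ((2:ℝ)^(j:ℝ) * (2:ℝ)^(j:ℝ)) / (N * N) = 4 * (2:ℝ) ^ ((j:ℝ) - 2 * C₀) := by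
        rw [hNsq, ← Real.rpow_add two_pos, div_eq_iff (by positivity), mul_assoc,
          ← Real.rpow_add two_pos]
        ring_nf
      linarith [heq ▸ hdiv]
    have : (0:ℝ) < (2:ℝ) ^ ((j:ℝ) - 2 * C₀) := Real.rpow_pos_of_pos two_pos _
    linarith

end
end

section
/- Let ε ∈ (0,1), K > 0, let W : [0,1] → ℝ be measurable and (1−ε, 1/2)-irregular with constant K, let T₀ ∈ (0,1], and let h : ℤ² → [0,∞) be finitely supported. Then ∫_0^{T₀} ∫_{𝕋²} |Σ_{k∈ℤ²} h(k) e^{−i W_t |k|²} e^{i k·x}|⁴ dμ(x) dt ≤ T₀ · Σ_{Q∈𝒬⁰} h(Q) + K √T₀ · Σ_{τ∈ℤ, τ≠0} (1+|τ|)^{−(1−ε)} Σ_{Q∈𝒬^τ} h(Q). -/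
open MeasureTheory Complex

noncomputable section

/-- The character `x ↦ e^{i k·x}` on the torus `(ℝ/2πℤ)²`, viewed as a
`2π`-periodic function on `ℝ × ℝ`. -/
def torusChar2 (k : ℤ × ℤ) (x : ℝ × ℝ) : ℂ :=
  Complex.exp (Complex.I * ((k.1 : ℂ) * (x.1 : ℂ) + (k.2 : ℂ) * (x.2 : ℂ)))

/-- Integral over the torus `𝕋² = (ℝ/2πℤ)²` with respect to the normalized Haar
probability measure, computed on the fundamental domain `[0,2π]²`. -/
def torusIntegral2 (F : ℝ × ℝ → ℝ) : ℝ :=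
  (1 / (2 * Real.pi) ^ 2) *
    ∫ x in Set.Icc (0 : ℝ) (2 * Real.pi) ×ˢ Set.Icc (0 : ℝ) (2 * Real.pi), F x

/-- `|k|² = k₁² + k₂²` for `k ∈ ℤ²`. -/
def normSq2 (k : ℤ × ℤ) : ℤ := k.1 ^ 2 + k.2 ^ 2

/-- Quadruples `Q = (k₁,k₂,k₃,k₄)` of points of `ℤ²`. -/
abbrev Quad := (ℤ × ℤ) × (ℤ × ℤ) × (ℤ × ℤ) × (ℤ × ℤ)

/-- Membership in `𝒬`: `k₁ - k₂ + k₃ - k₄ = 0`. -/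
def isParallelogram (Q : Quad) : Prop := Q.1 - Q.2.1 + Q.2.2.1 - Q.2.2.2 = 0

instance : DecidablePred isParallelogram := fun Q => by
  unfold isParallelogram; infer_instance

/-- `τ_Q = |k₁|² - |k₂|² + |k₃|² - |k₄|²`. -/
def tauQ (Q : Quad) : ℤ :=
  normSq2 Q.1 - normSq2 Q.2.1 + normSq2 Q.2.2.1 - normSq2 Q.2.2.2

/-- `h(Q) = h(k₁) h(k₂) h(k₃) h(k₄)` for real-valued `h`. -/
def hQuadR (h : ℤ × ℤ → ℝ) (Q : Quad) : ℝ :=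
  h Q.1 * h Q.2.1 * h Q.2.2.1 * h Q.2.2.2

/-- `W : [0,1] → ℝ` is `(ρ,γ)`-irregular with constant `K`. -/
def Irregular (W : ℝ → ℝ) (ρ γ K : ℝ) : Prop :=
  ∀ s t : ℝ, 0 ≤ s → s < t → t ≤ 1 → ∀ τ : ℝ,
    ‖∫ u in s..t, Complex.exp (Complex.I * (W u : ℂ) * (τ : ℂ))‖ ≤
      K * (1 + |τ|) ^ (-ρ) * (t - s) ^ γ

/-! ### Auxiliary lemmas -/

lemma torusChar2_continuous (k : ℤ × ℤ) : Continuous (torusChar2 k) := by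
  unfold torusChar2; fun_prop

lemma integral1D (m : ℤ) :
    (∫ x in Set.Icc (0:ℝ) (2*Real.pi), Complex.exp (Complex.I * m * x)) =
      if m = 0 then ((2*Real.pi : ℝ) : ℂ) else 0 := by
  rw [MeasureTheory.integral_Icc_eq_integral_Ioc,
      ← intervalIntegral.integral_of_le (by positivity : (0:ℝ) ≤ 2*Real.pi)]
  by_cases hm : m = 0
  · simp [hm, two_mul]
  · rw [if_neg hm, integral_exp_mul_complex
      (mul_ne_zero Complex.I_ne_zero (Int.cast_ne_zero.2 hm))]
    have h1 : Complex.I * m * ((2*Real.pi : ℝ) : ℂ) = m * (2 * Real.pi * Complex.I) := by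
      push_cast; ring
    have h2 : Complex.I * m * ((0:ℝ) : ℂ) = 0 := by push_cast; ring
    rw [h1, h2, Complex.exp_int_mul_two_pi_mul_I, Complex.exp_zero, sub_self, zero_div]

lemma integral2D (m : ℤ × ℤ) :
    (∫ x in (Set.Icc (0:ℝ) (2*Real.pi)) ×ˢ (Set.Icc (0:ℝ) (2*Real.pi)), torusChar2 m x) =
      if m = 0 then ((((2*Real.pi))^2 : ℝ) : ℂ) else 0 := by
  have hint : IntegrableOn (torusChar2 m)
      ((Set.Icc (0:ℝ) (2*Real.pi)) ×ˢ (Set.Icc (0:ℝ) (2*Real.pi))) volume :=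
    (torusChar2_continuous m).continuousOn.integrableOn_compact
      (isCompact_Icc.prod isCompact_Icc)
  rw [MeasureTheory.Measure.volume_eq_prod, MeasureTheory.setIntegral_prod _
    (by rwa [← MeasureTheory.Measure.volume_eq_prod])]
  have key : ∀ x : ℝ, (∫ y in Set.Icc (0:ℝ) (2*Real.pi), torusChar2 m (x, y))
      = Complex.exp (Complex.I * m.1 * x) *
        (if m.2 = 0 then ((2*Real.pi : ℝ) : ℂ) else 0) := by
    intro x
    rw [← integral1D m.2, ← MeasureTheory.integral_const_mul]
    congr 1; funext y
    unfold torusChar2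
    rw [← Complex.exp_add]; ring_nf
  simp only [key]
  rw [MeasureTheory.integral_mul_const, integral1D]
  by_cases h1 : m.1 = 0 <;> by_cases h2 : m.2 = 0 <;>
    simp [h1, h2, Prod.ext_iff, Complex.ofReal_pow]
  ring

lemma torusIntegral2_term (α : ℂ) (m : ℤ × ℤ) :
    torusIntegral2 (fun x => (α * torusChar2 m x).re) =
      if m = 0 then α.re else 0 := by
  have hint : IntegrableOn (fun x => α * torusChar2 m x)
      ((Set.Icc (0:ℝ) (2*Real.pi)) ×ˢ (Set.Icc (0:ℝ) (2*Real.pi))) volume :=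
    (continuous_const.mul (torusChar2_continuous m)).continuousOn.integrableOn_compact
      (isCompact_Icc.prod isCompact_Icc)
  unfold torusIntegral2
  have hre := Complex.reCLM.integral_comp_comm hint
  simp only [Complex.reCLM_apply] at hre
  rw [hre, MeasureTheory.integral_const_mul, integral2D]
  have hπ : (2*Real.pi)^2 ≠ 0 := by positivity
  by_cases hm : m = 0
  · rw [if_pos hm, if_pos hm, mul_comm α, Complex.re_ofReal_mul]
    field_simp
  · simp [hm]

lemma term_eq (h : ℤ × ℤ → ℝ) (w : ℝ) (x : ℝ × ℝ) (Q : Quad) :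
    ((h Q.1 : ℂ) * Complex.exp (-Complex.I * (w:ℂ) * (normSq2 Q.1 : ℂ)) * torusChar2 Q.1 x) *
    (starRingEnd ℂ) ((h Q.2.1 : ℂ) * Complex.exp (-Complex.I * (w:ℂ) * (normSq2 Q.2.1 : ℂ)) * torusChar2 Q.2.1 x) *
    ((h Q.2.2.1 : ℂ) * Complex.exp (-Complex.I * (w:ℂ) * (normSq2 Q.2.2.1 : ℂ)) * torusChar2 Q.2.2.1 x) *
    (starRingEnd ℂ) ((h Q.2.2.2 : ℂ) * Complex.exp (-Complex.I * (w:ℂ) * (normSq2 Q.2.2.2 : ℂ)) * torusChar2 Q.2.2.2 x)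
    = (hQuadR h Q : ℂ) * Complex.exp (-Complex.I * (w:ℂ) * (tauQ Q : ℂ)) *
        torusChar2 (Q.1 - Q.2.1 + Q.2.2.1 - Q.2.2.2) x := by
  obtain ⟨k1, k2, k3, k4⟩ := Q
  simp only [torusChar2, hQuadR, tauQ, map_mul, ← Complex.exp_conj, map_add, map_neg,
    Complex.conj_I, Complex.conj_ofReal, map_intCast, ← Complex.exp_add,
    Complex.ofReal_mul]
  trans ((h k1 : ℂ) * (h k2 : ℂ) * (h k3 : ℂ) * (h k4 : ℂ) * Complex.exp (
    (-Complex.I*(w:ℂ)*(normSq2 k1 : ℂ)) + (- -Complex.I*(w:ℂ)*(normSq2 k2 : ℂ))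
    + (-Complex.I*(w:ℂ)*(normSq2 k3 : ℂ)) + (- -Complex.I*(w:ℂ)*(normSq2 k4 : ℂ))
    + Complex.I*((k1.1:ℂ)*(x.1:ℂ)+(k1.2:ℂ)*(x.2:ℂ)) + -Complex.I*((k2.1:ℂ)*(x.1:ℂ)+(k2.2:ℂ)*(x.2:ℂ))
    + Complex.I*((k3.1:ℂ)*(x.1:ℂ)+(k3.2:ℂ)*(x.2:ℂ)) + -Complex.I*((k4.1:ℂ)*(x.1:ℂ)+(k4.2:ℂ)*(x.2:ℂ))))
  · simp only [Complex.exp_add]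
    ring
  · rw [mul_assoc ((h k1 : ℂ) * (h k2 : ℂ) * (h k3 : ℂ) * (h k4 : ℂ)), ← Complex.exp_add]
    have e1 : ((k1 - k2 + k3 - k4).1 : ℂ) = (k1.1 : ℂ) - k2.1 + k3.1 - k4.1 := by
      simp [Prod.fst_sub, Prod.fst_add]
    have e2 : ((k1 - k2 + k3 - k4).2 : ℂ) = (k1.2 : ℂ) - k2.2 + k3.2 - k4.2 := by
      simp [Prod.snd_sub, Prod.snd_add]
    rw [e1, e2, show (-Complex.I * (w:ℂ) * ((normSq2 k1 - normSq2 k2 + normSq2 k3 - normSq2 k4 : ℤ) : ℂ) +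
        Complex.I * (((k1.1:ℂ) - k2.1 + k3.1 - k4.1) * (x.1:ℂ) + ((k1.2:ℂ) - k2.2 + k3.2 - k4.2) * (x.2:ℂ)))
      = (-Complex.I*(w:ℂ)*(normSq2 k1 : ℂ)) + (- -Complex.I*(w:ℂ)*(normSq2 k2 : ℂ))
    + (-Complex.I*(w:ℂ)*(normSq2 k3 : ℂ)) + (- -Complex.I*(w:ℂ)*(normSq2 k4 : ℂ))
    + Complex.I*((k1.1:ℂ)*(x.1:ℂ)+(k1.2:ℂ)*(x.2:ℂ)) + -Complex.I*((k2.1:ℂ)*(x.1:ℂ)+(k2.2:ℂ)*(x.2:ℂ))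
    + Complex.I*((k3.1:ℂ)*(x.1:ℂ)+(k3.2:ℂ)*(x.2:ℂ)) + -Complex.I*((k4.1:ℂ)*(x.1:ℂ)+(k4.2:ℂ)*(x.2:ℂ)) from by
        push_cast [normSq2]; ring]

lemma sum_quad (A : Finset (ℤ×ℤ)) (f g p q : (ℤ×ℤ) → ℂ) :
    (∑ a ∈ A, f a) * (∑ b ∈ A, g b) * ((∑ c ∈ A, p c) * (∑ d ∈ A, q d))
    = ∑ Q ∈ A ×ˢ A ×ˢ A ×ˢ A, f Q.1 * g Q.2.1 * p Q.2.2.1 * q Q.2.2.2 := by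
  rw [Finset.sum_mul_sum A A f g, Finset.sum_mul_sum A A p q,
    Finset.sum_mul_sum A A (fun a => ∑ b ∈ A, f a * g b) (fun c => ∑ d ∈ A, p c * q d)]
  simp only [Finset.sum_mul, Finset.mul_sum, Finset.sum_product]
  refine Finset.sum_congr rfl fun a _ => ?_
  refine (Finset.sum_congr rfl fun c _ => Finset.sum_comm).trans ?_
  rw [Finset.sum_comm]
  exact Finset.sum_congr rfl fun b _ => Finset.sum_congr rfl fun c _ =>
    Finset.sum_congr rfl fun d _ => by ring

lemma norm_pow_four (z : ℂ) : ‖z‖^4 = (z * (starRingEnd ℂ) z * (z * (starRingEnd ℂ) z)).re := by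
  rw [Complex.mul_conj, ← Complex.ofReal_mul]
  rw [Complex.ofReal_re]
  rw [Complex.normSq_eq_norm_sq]
  ring

lemma torus_expand (h : ℤ × ℤ → ℝ) (A : Finset (ℤ × ℤ)) (w : ℝ) :
    torusIntegral2 (fun x => ‖∑ k ∈ A, (h k : ℂ) *
        Complex.exp (-Complex.I * (w : ℂ) * (normSq2 k : ℂ)) * torusChar2 k x‖ ^ 4)
    = ∑ Q ∈ (A ×ˢ A ×ˢ A ×ˢ A).filter isParallelogram,
        ((hQuadR h Q : ℂ) * Complex.exp (-Complex.I * (w:ℂ) * (tauQ Q : ℂ))).re := by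
  have px : ∀ x : ℝ × ℝ, ‖∑ k ∈ A, (h k : ℂ) *
        Complex.exp (-Complex.I * (w : ℂ) * (normSq2 k : ℂ)) * torusChar2 k x‖ ^ 4
      = ∑ Q ∈ A ×ˢ A ×ˢ A ×ˢ A,
          ((hQuadR h Q : ℂ) * Complex.exp (-Complex.I * (w:ℂ) * (tauQ Q : ℂ)) *
            torusChar2 (Q.1 - Q.2.1 + Q.2.2.1 - Q.2.2.2) x).re := by
    intro x
    rw [norm_pow_four, map_sum, sum_quad]
    rw [← Complex.re_sum]
    congr 1
    exact Finset.sum_congr rfl fun Q _ => term_eq h w x Q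
  have lin : torusIntegral2 (fun x => ∑ Q ∈ A ×ˢ A ×ˢ A ×ˢ A,
      ((hQuadR h Q : ℂ) * Complex.exp (-Complex.I * (w:ℂ) * (tauQ Q : ℂ)) *
        torusChar2 (Q.1 - Q.2.1 + Q.2.2.1 - Q.2.2.2) x).re)
      = ∑ Q ∈ A ×ˢ A ×ˢ A ×ˢ A, torusIntegral2 (fun x =>
      ((hQuadR h Q : ℂ) * Complex.exp (-Complex.I * (w:ℂ) * (tauQ Q : ℂ)) *
        torusChar2 (Q.1 - Q.2.1 + Q.2.2.1 - Q.2.2.2) x).re) := by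
    unfold torusIntegral2
    rw [MeasureTheory.integral_finset_sum, Finset.mul_sum]
    intro Q _
    exact ((Complex.continuous_re.comp (continuous_const.mul
      (torusChar2_continuous _))).continuousOn).integrableOn_compact
      (isCompact_Icc.prod isCompact_Icc)
  calc torusIntegral2 (fun x => ‖∑ k ∈ A, (h k : ℂ) *
        Complex.exp (-Complex.I * (w : ℂ) * (normSq2 k : ℂ)) * torusChar2 k x‖ ^ 4)
      = ∑ Q ∈ A ×ˢ A ×ˢ A ×ˢ A, torusIntegral2 (fun x =>
          ((hQuadR h Q : ℂ) * Complex.exp (-Complex.I * (w:ℂ) * (tauQ Q : ℂ)) *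
            torusChar2 (Q.1 - Q.2.1 + Q.2.2.1 - Q.2.2.2) x).re) := by
        rw [← lin]; congr 1; funext x; exact px x
    _ = ∑ Q ∈ A ×ˢ A ×ˢ A ×ˢ A, (if Q.1 - Q.2.1 + Q.2.2.1 - Q.2.2.2 = 0 then
          ((hQuadR h Q : ℂ) * Complex.exp (-Complex.I * (w:ℂ) * (tauQ Q : ℂ))).re else 0) := by
        exact Finset.sum_congr rfl fun Q _ => torusIntegral2_term _ _
    _ = ∑ Q ∈ (A ×ˢ A ×ˢ A ×ˢ A).filter isParallelogram,
        ((hQuadR h Q : ℂ) * Complex.exp (-Complex.I * (w:ℂ) * (tauQ Q : ℂ))).re := by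
        rw [Finset.sum_filter]
        exact Finset.sum_congr rfl fun Q _ => by unfold isParallelogram; congr

lemma exp_norm_one (w : ℝ) (n : ℤ) : ‖Complex.exp (-Complex.I * (w:ℂ) * (n:ℂ))‖ = 1 := by
  have : (-Complex.I * (w:ℂ) * (n:ℂ)).re = 0 := by simp
  rw [Complex.norm_exp, this, Real.exp_zero]

lemma interval_integrable_aux {E : Type*} [NormedAddCommGroup E] [MeasurableSpace E]
    [BorelSpace E] [SecondCountableTopology E] (f : ℝ → E) (hf : Measurable f) (C : ℝ)
    (hC : ∀ t, ‖f t‖ ≤ C) (a b : ℝ) : IntervalIntegrable f volume a b := by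
  rw [intervalIntegrable_iff]
  refine MeasureTheory.Integrable.mono' (g := fun _ => C)
    (MeasureTheory.integrableOn_const ?_) hf.aestronglyMeasurable
    (Filter.Eventually.of_forall fun t => hC t)
  exact measure_Ioc_lt_top.ne

/-- The basic estimate of the `L⁴` norm of a modulated
trigonometric polynomial with nonnegative coefficients in terms of the counting
quantities `Σ_{Q ∈ 𝒬^τ} h(Q)` and the irregularity of `W`. -/
theorem stmt12 (ε K : ℝ) (hε : ε ∈ Set.Ioo (0 : ℝ) 1) (hK : 0 < K)
    (W : ℝ → ℝ) (hW : Measurable W) (hirr : Irregular W (1 - ε) (1 / 2) K)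
    (T₀ : ℝ) (hT₀ : T₀ ∈ Set.Ioc (0 : ℝ) 1)
    (h : ℤ × ℤ → ℝ) (hpos : ∀ k, 0 ≤ h k)
    (A : Finset (ℤ × ℤ)) (hsupp : ∀ k, h k ≠ 0 → k ∈ A) :
    (∫ t in (0 : ℝ)..T₀, torusIntegral2 fun x =>
        ‖∑ k ∈ A, (h k : ℂ) *
            Complex.exp (-Complex.I * (W t : ℂ) * (normSq2 k : ℂ)) *
            torusChar2 k x‖ ^ 4)
      ≤ T₀ * (∑ Q ∈ (A ×ˢ A ×ˢ A ×ˢ A).filter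
            (fun Q => isParallelogram Q ∧ tauQ Q = 0), hQuadR h Q)
        + K * Real.sqrt T₀ * ∑ Q ∈ (A ×ˢ A ×ˢ A ×ˢ A).filter
            (fun Q => isParallelogram Q ∧ tauQ Q ≠ 0),
            ((1 + |(tauQ Q : ℝ)|) ^ (-(1 - ε)) * hQuadR h Q) := by
  obtain ⟨hT0, hT1⟩ := hT₀
  set P : Finset Quad := (A ×ˢ A ×ˢ A ×ˢ A).filter isParallelogram with hP
  set g : Quad → ℝ → ℝ := fun Q t =>
    ((hQuadR h Q : ℂ) * Complex.exp (-Complex.I * (W t : ℂ) * (tauQ Q : ℂ))).re with hg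
  have hQpos : ∀ Q : Quad, 0 ≤ hQuadR h Q := fun Q =>
    mul_nonneg (mul_nonneg (mul_nonneg (hpos _) (hpos _)) (hpos _)) (hpos _)
  have hmeasC : ∀ Q : Quad, Measurable fun t =>
      (hQuadR h Q : ℂ) * Complex.exp (-Complex.I * (W t : ℂ) * (tauQ Q : ℂ)) := by
    intro Q
    exact (Complex.continuous_exp.measurable.comp
      (((measurable_const.mul (Complex.measurable_ofReal.comp hW)).mul
        measurable_const))).const_mul _
  have hboundC : ∀ Q : Quad, ∀ t : ℝ,
      ‖(hQuadR h Q : ℂ) * Complex.exp (-Complex.I * (W t : ℂ) * (tauQ Q : ℂ))‖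
        ≤ hQuadR h Q := by
    intro Q t
    rw [norm_mul, exp_norm_one, mul_one, Complex.norm_real, Real.norm_eq_abs]
    exact le_of_eq (_root_.abs_of_nonneg (hQpos Q))
  have hiiC : ∀ Q : Quad, IntervalIntegrable (fun t =>
      (hQuadR h Q : ℂ) * Complex.exp (-Complex.I * (W t : ℂ) * (tauQ Q : ℂ)))
      volume 0 T₀ :=
    fun Q => interval_integrable_aux _ (hmeasC Q) _ (hboundC Q) 0 T₀
  have hii : ∀ Q : Quad, IntervalIntegrable (g Q) volume 0 T₀ := by
    intro Q
    refine interval_integrable_aux _ (Complex.measurable_re.comp (hmeasC Q))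
      (hQuadR h Q) (fun t => ?_) 0 T₀
    calc ‖g Q t‖ ≤ ‖(hQuadR h Q : ℂ) *
          Complex.exp (-Complex.I * (W t : ℂ) * (tauQ Q : ℂ))‖ := by
          rw [Real.norm_eq_abs]
          exact Complex.abs_re_le_norm _
      _ ≤ hQuadR h Q := hboundC Q t
  have key : (∫ t in (0 : ℝ)..T₀, torusIntegral2 fun x =>
        ‖∑ k ∈ A, (h k : ℂ) *
            Complex.exp (-Complex.I * (W t : ℂ) * (normSq2 k : ℂ)) *
            torusChar2 k x‖ ^ 4) = ∑ Q ∈ P, ∫ t in (0:ℝ)..T₀, g Q t := by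
    rw [← intervalIntegral.integral_finset_sum (fun Q _ => hii Q)]
    exact intervalIntegral.integral_congr fun t _ => torus_expand h A (W t)
  rw [key]
  have hsplit : ∑ Q ∈ P, (∫ t in (0:ℝ)..T₀, g Q t)
      = (∑ Q ∈ P.filter (fun Q => tauQ Q = 0), ∫ t in (0:ℝ)..T₀, g Q t)
      + ∑ Q ∈ P.filter (fun Q => ¬ tauQ Q = 0), ∫ t in (0:ℝ)..T₀, g Q t :=
    (Finset.sum_filter_add_sum_filter_not P _ _).symm
  rw [hsplit, hP, Finset.filter_filter, Finset.filter_filter]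
  have part0 : (∑ Q ∈ (A ×ˢ A ×ˢ A ×ˢ A).filter
      (fun Q => isParallelogram Q ∧ tauQ Q = 0), ∫ t in (0:ℝ)..T₀, g Q t)
      = T₀ * ∑ Q ∈ (A ×ˢ A ×ˢ A ×ˢ A).filter
          (fun Q => isParallelogram Q ∧ tauQ Q = 0), hQuadR h Q := by
    rw [Finset.mul_sum]
    refine Finset.sum_congr rfl fun Q hQ => ?_
    have htau : tauQ Q = 0 := (Finset.mem_filter.1 hQ).2.2
    have : ∀ t : ℝ, g Q t = hQuadR h Q := by
      intro t
      simp [hg, htau]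
    simp only [this]
    rw [intervalIntegral.integral_const, smul_eq_mul, sub_zero]
  have part1 : (∑ Q ∈ (A ×ˢ A ×ˢ A ×ˢ A).filter
      (fun Q => isParallelogram Q ∧ ¬ tauQ Q = 0), ∫ t in (0:ℝ)..T₀, g Q t)
      ≤ K * Real.sqrt T₀ * ∑ Q ∈ (A ×ˢ A ×ˢ A ×ˢ A).filter
          (fun Q => isParallelogram Q ∧ tauQ Q ≠ 0),
          ((1 + |(tauQ Q : ℝ)|) ^ (-(1 - ε)) * hQuadR h Q) := by
    rw [Finset.mul_sum]
    refine Finset.sum_le_sum fun Q hQ => ?_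
    have htau : tauQ Q ≠ 0 := (Finset.mem_filter.1 hQ).2.2
    have hint_eq : (∫ t in (0:ℝ)..T₀, g Q t)
        = ((hQuadR h Q : ℂ) *
            ∫ t in (0:ℝ)..T₀, Complex.exp (-Complex.I * (W t : ℂ) * (tauQ Q : ℂ))).re := by
      rw [← intervalIntegral.integral_const_mul]
      exact (Complex.reCLM.intervalIntegral_comp_comm (hiiC Q)).symm ▸ rfl
    have hIbound : ‖∫ t in (0:ℝ)..T₀,
        Complex.exp (-Complex.I * (W t : ℂ) * (tauQ Q : ℂ))‖
        ≤ K * (1 + |(tauQ Q : ℝ)|) ^ (-(1 - ε)) * Real.sqrt T₀ := by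
      have heq : (∫ t in (0:ℝ)..T₀, Complex.exp (-Complex.I * (W t : ℂ) * (tauQ Q : ℂ)))
          = ∫ t in (0:ℝ)..T₀,
              Complex.exp (Complex.I * (W t : ℂ) * ((-(tauQ Q : ℝ) : ℝ) : ℂ)) := by
        refine intervalIntegral.integral_congr fun t _ => ?_
        congr 1
        push_cast
        ring
      rw [heq]
      have := hirr 0 T₀ le_rfl hT0 hT1 (-(tauQ Q : ℝ))
      rwa [abs_neg, sub_zero, ← Real.sqrt_eq_rpow] at this
    calc (∫ t in (0:ℝ)..T₀, g Q t)
        ≤ ‖(hQuadR h Q : ℂ) *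
            ∫ t in (0:ℝ)..T₀, Complex.exp (-Complex.I * (W t : ℂ) * (tauQ Q : ℂ))‖ := by
          rw [hint_eq]
          exact Complex.re_le_norm _
      _ = hQuadR h Q * ‖∫ t in (0:ℝ)..T₀,
            Complex.exp (-Complex.I * (W t : ℂ) * (tauQ Q : ℂ))‖ := by
          rw [norm_mul, Complex.norm_real, Real.norm_eq_abs, _root_.abs_of_nonneg (hQpos Q)]
      _ ≤ hQuadR h Q * (K * (1 + |(tauQ Q : ℝ)|) ^ (-(1 - ε)) * Real.sqrt T₀) :=
          mul_le_mul_of_nonneg_left hIbound (hQpos Q)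
      _ = K * Real.sqrt T₀ * ((1 + |(tauQ Q : ℝ)|) ^ (-(1 - ε)) * hQuadR h Q) := by
          ring
  calc _ ≤ T₀ * (∑ Q ∈ (A ×ˢ A ×ˢ A ×ˢ A).filter
        (fun Q => isParallelogram Q ∧ tauQ Q = 0), hQuadR h Q)
      + ∑ Q ∈ (A ×ˢ A ×ˢ A ×ˢ A).filter
          (fun Q => isParallelogram Q ∧ ¬ tauQ Q = 0), ∫ t in (0:ℝ)..T₀, g Q t := by
        rw [part0]
    _ ≤ _ := add_le_add_right part1 _

end
end
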